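/- arXiv:2506.16879 — 3 statements merged into one kernel-verified Lean document; each statement's English description precedes it below -/
import Mathlib

section
/- Let R be a finite list of positive integers of length l, where l is odd. Suppose exactly o values appear in R with odd multiplicity, where o is odd. Then the number of pairs of positions i < j with r_i ≠ r_j is even if ⌊o/2⌋ is even, and odd if ⌊o/2⌋ is odd. -/
private lemma sq_mod_four (c : ℕ) : c^2 % 4 = if Odd c then 1 else 0 := by
  rcases Nat.even_or_odd c with ⟨k, hk⟩ | ⟨k, hk⟩
  · have h1 : c^2 = 4 * (k*k) := by subst hk; ring
    have h2 : ¬ Odd c := Nat.not_odd_iff_even.mpr ⟨k, hk⟩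
    simp [h2]; omega
  · have h1 : c^2 = 4 * (k*k+k) + 1 := by subst hk; ring
    have h2 : Odd c := ⟨k, hk⟩
    simp [h2]; omega

private lemma count_fin (R : List ℕ) (t : ℕ) :
    (Finset.univ.filter (fun i : Fin R.length => R.get i = t)).card = R.count t := by
  have := Fin.card_filter_univ_eq_vector_get_eq_count t (⟨R, rfl⟩ : List.Vector ℕ R.length)
  exact this

theorem parity_unequal_pairs_odd_length (R : List ℕ) (hpos : ∀ r ∈ R, 0 < r)
    (hlen : Odd R.length) (o : ℕ)
    (ho : (R.toFinset.filter (fun t => Odd (R.count t))).card = o)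
    (hoodd : Odd o) :
    (Finset.univ.filter
        (fun p : Fin R.length × Fin R.length =>
          p.1 < p.2 ∧ R.get p.1 ≠ R.get p.2)).card % 2 = (o / 2) % 2 := by
  classical
  set l := R.length with hl
  set X := (Finset.univ.filter
        (fun p : Fin l × Fin l => p.1 < p.2 ∧ R.get p.1 ≠ R.get p.2)).card with hX
  set X' := (Finset.univ.filter
        (fun p : Fin l × Fin l => p.2 < p.1 ∧ R.get p.1 ≠ R.get p.2)).card with hX'
  set E := (Finset.univ.filter
        (fun p : Fin l × Fin l => ¬ R.get p.1 ≠ R.get p.2)).card with hE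
  -- X = X'
  have hXX' : X = X' := by
    apply Finset.card_nbij' Prod.swap Prod.swap
    · intro p hp
      simp only [Finset.mem_filter, Finset.mem_univ, true_and, Finset.mem_coe] at hp ⊢
      exact ⟨hp.1, fun h => hp.2 h.symm⟩
    · intro p hp
      simp only [Finset.mem_filter, Finset.mem_univ, true_and, Finset.mem_coe] at hp ⊢
      exact ⟨hp.1, fun h => hp.2 h.symm⟩
    · intro p _; rfl
    · intro p _; rfl
  -- split inequality pairs
  have hsplit : (Finset.univ.filter
        (fun p : Fin l × Fin l => R.get p.1 ≠ R.get p.2)).card = X + X' := by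
    rw [hX, hX', ← Finset.card_union_of_disjoint, ← Finset.filter_or]
    · apply Finset.card_nbij id (fun p hp => ?_) (fun p hp q hq h => h) (fun p hp => ?_)
      · simp only [Finset.mem_filter, Finset.mem_univ, true_and, Finset.mem_coe] at hp ⊢
        have hne : p.1 ≠ p.2 := fun h => hp (by rw [h])
        rcases lt_or_gt_of_ne hne with h | h
        · exact Or.inl ⟨h, hp⟩
        · exact Or.inr ⟨h, hp⟩
      · refine ⟨p, ?_, rfl⟩
        simp only [Finset.mem_filter, Finset.mem_univ, true_and, Finset.mem_coe] at hp ⊢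
        rcases hp with ⟨_, h⟩ | ⟨_, h⟩ <;> exact h
    · rw [Finset.disjoint_filter]
      rintro p _ ⟨h1, _⟩ ⟨h2, _⟩
      exact absurd (h1.trans h2) (lt_irrefl _)
  -- total
  have htot : X + X' + E = l^2 := by
    rw [← hsplit, hE, Finset.card_filter_add_card_filter_not]
    simp [sq]
  -- E = sum of squares of counts
  have hEsum : E = ∑ t ∈ R.toFinset, (R.count t)^2 := by
    have h1 : E = ∑ i : Fin l, R.count (R.get i) := by
      rw [hE, Finset.card_filter]
      rw [Fintype.sum_prod_type]
      congr 1; ext i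
      rw [← count_fin R (R.get i)]
      rw [Finset.card_filter]
      congr 1; ext j
      simp [eq_comm]
    rw [h1, Finset.sum_comp (fun t => R.count t) (fun i : Fin l => R.get i)]
    have himg : Finset.univ.image (fun i : Fin l => R.get i) = R.toFinset := by
      ext t
      simp only [Finset.mem_image, Finset.mem_univ, true_and, List.mem_toFinset]
      rw [List.mem_iff_get]
    rw [himg]
    apply Finset.sum_congr rfl
    intro t _
    rw [count_fin R t, smul_eq_mul, sq]
  -- E % 4 = o % 4
  have hE4 : E % 4 = o % 4 := by
    rw [hEsum, Finset.sum_nat_mod]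
    have : ∀ t ∈ R.toFinset, (R.count t)^2 % 4 = if Odd (R.count t) then 1 else 0 :=
      fun t _ => sq_mod_four _
    rw [Finset.sum_congr rfl this, ← Finset.card_filter, ho]
  -- l^2 % 8 = 1
  have hl8 : l^2 % 8 = 1 := by
    obtain ⟨k, hk⟩ := hlen
    obtain ⟨m, hm⟩ : Even (k * (k+1)) := Nat.even_mul_succ_self k
    have : l^2 = 4 * (k*(k+1)) + 1 := by rw [hk]; ring
    omega
  obtain ⟨j, hj⟩ := hoodd
  omega
end

section
/- Let R be a finite list of positive integers of length l, where l is even. Suppose exactly o values appear in R with odd multiplicity (so o is even). Then the number of pairs of positions i < j with r_i ≠ r_j is even if and only if o/2 is even. -/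
open Finset

-- pairs i<j within s has card choose 2
lemma aux_card_lt_pairs {α : Type*} [LinearOrder α] [DecidableEq α] (s : Finset α) :
    ((s ×ˢ s).filter fun p => p.1 < p.2).card = s.card.choose 2 := by
  have hswap : ((s ×ˢ s).filter fun p => p.1 < p.2).card
      = ((s ×ˢ s).filter fun p => p.2 < p.1).card := by
    apply Finset.card_nbij' (fun p => p.swap) (fun p => p.swap) <;>
      simp +contextual [Finset.mem_filter, Finset.mem_product, and_comm, Set.MapsTo, Set.LeftInvOn, Set.RightInvOn]
  have hdisj : Disjoint ((s ×ˢ s).filter fun p => p.1 < p.2)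
      ((s ×ˢ s).filter fun p => p.2 < p.1) := by
    rw [Finset.disjoint_filter]
    intro p _ h1
    exact lt_asymm h1
  have hunion : ((s ×ˢ s).filter fun p => p.1 < p.2) ∪ ((s ×ˢ s).filter fun p => p.2 < p.1)
      = s.offDiag := by
    ext p
    simp only [Finset.mem_union, Finset.mem_filter, Finset.mem_product, Finset.mem_offDiag]
    constructor
    · rintro (⟨⟨h1, h2⟩, h⟩ | ⟨⟨h1, h2⟩, h⟩)
      · exact ⟨h1, h2, ne_of_lt h⟩
      · exact ⟨h1, h2, (ne_of_lt h).symm⟩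
    · rintro ⟨h1, h2, h⟩
      rcases lt_or_gt_of_ne h with h' | h'
      · exact Or.inl ⟨⟨h1, h2⟩, h'⟩
      · exact Or.inr ⟨⟨h1, h2⟩, h'⟩
  have hcard := Finset.card_union_of_disjoint hdisj
  rw [hunion, Finset.offDiag_card, ← hswap] at hcard
  have heven : 2 * (s.card.choose 2) = s.card * s.card - s.card := by
    have hc := Nat.choose_two_right s.card
    have h2 : 2 ∣ s.card * (s.card - 1) := by
      rcases Nat.even_or_odd s.card with he | ho
      · exact Dvd.dvd.mul_right he.two_dvd _
      · exact Dvd.dvd.mul_left (by rcases ho with ⟨k, hk⟩; exact ⟨k, by omega⟩) _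
    have hmm : s.card * s.card = s.card * (s.card - 1) + s.card := by
      rcases s.card with _ | k
      · simp
      · simp only [Nat.succ_sub_one]; ring
    rw [hc, Nat.mul_div_cancel' h2]
    omega
  obtain ⟨x, hx⟩ : ∃ x, s.card * s.card - s.card = x := ⟨_, rfl⟩
  rw [hx] at hcard heven
  omega

lemma aux_count_eq_card (l : List ℕ) (t : ℕ) :
    (Finset.univ.filter (fun i : Fin l.length => l.get i = t)).card = l.count t := by
  induction l with
  | nil => simp
  | cons x xs ih =>
    rw [Finset.card_filter] at ih ⊢
    simp only [List.length_cons]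
    rw [Fin.sum_univ_succ]
    simp only [List.get_cons_zero, List.get_cons_succ, Fin.succ]
    rw [List.count_cons, ih]
    by_cases h : x = t <;> simp [h] <;> omega

lemma aux_choose_two_parity (m : ℕ) : m.choose 2 % 2 = (m / 2) % 2 := by
  have hc := Nat.choose_two_right m
  rcases Nat.even_or_odd m with ⟨q, hq⟩ | ⟨q, hq⟩
  · subst hq
    have h1 : (q + q) * (q + q - 1) / 2 = q * (q + q - 1) := by
      rw [show (q + q) * (q + q - 1) = 2 * (q * (q + q - 1)) by ring]
      omega
    rw [hc, h1]
    have h2 : q * (q + q - 1) % 2 = q % 2 := by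
      rcases q with _ | k
      · simp
      · have h3 : k + 1 + (k + 1) - 1 = 2 * k + 1 := by omega
        rw [h3, Nat.mul_mod]
        have h4 : (2 * k + 1) % 2 = 1 := by omega
        rw [h4, mul_one]
        omega
    rw [h2]
    omega
  · subst hq
    have h0 : 2 * q + 1 - 1 = 2 * q := by omega
    have h1 : (2 * q + 1) * (2 * q + 1 - 1) / 2 = (2 * q + 1) * q := by
      rw [h0, show (2 * q + 1) * (2 * q) = 2 * ((2 * q + 1) * q) by ring]
      omega
    rw [hc, h1, Nat.mul_mod]
    have h4 : (2 * q + 1) % 2 = 1 := by omega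
    rw [h4, one_mul]
    omega

theorem parity_unequal_pairs_even_length (R : List ℕ) (hpos : ∀ r ∈ R, 0 < r)
    (hlen : Even R.length) (o : ℕ)
    (ho : (R.toFinset.filter (fun t => Odd (R.count t))).card = o)
    (hoeven : Even o) :
    Even (Finset.univ.filter
        (fun p : Fin R.length × Fin R.length =>
          p.1 < p.2 ∧ R.get p.1 ≠ R.get p.2)).card ↔ Even (o / 2) := by
  classical
  set n := R.length with hn
  set P : Finset (Fin n × Fin n) := Finset.univ.filter (fun p => p.1 < p.2) with hP
  set E : Finset (Fin n × Fin n) :=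
    Finset.univ.filter (fun p => p.1 < p.2 ∧ R.get p.1 = R.get p.2) with hE
  set U : Finset (Fin n × Fin n) :=
    Finset.univ.filter (fun p => p.1 < p.2 ∧ R.get p.1 ≠ R.get p.2) with hU
  have hEU : E.card + U.card = P.card := by
    have := Finset.card_filter_add_card_filter_not
      (s := P) (p := fun p => R.get p.1 = R.get p.2)
    rw [Finset.filter_filter, Finset.filter_filter] at this
    exact this
  have hP2 : P.card = n.choose 2 := by
    rw [hP, ← Finset.univ_product_univ, aux_card_lt_pairs, Finset.card_univ, Fintype.card_fin]
  have hE3 : E.card = ∑ t ∈ R.toFinset, (R.count t).choose 2 := by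
    rw [Finset.card_eq_sum_card_fiberwise (f := fun p : Fin n × Fin n => R.get p.1) (t := R.toFinset)
      (fun p hp => List.mem_toFinset.2 (R.get_mem _))]
    refine Finset.sum_congr rfl (fun t _ => ?_)
    have hfib : E.filter (fun p => R.get p.1 = t) =
        ((Finset.univ.filter (fun i : Fin n => R.get i = t)) ×ˢ
          (Finset.univ.filter (fun i : Fin n => R.get i = t))).filter (fun p => p.1 < p.2) := by
      ext p
      simp only [hE, Finset.mem_filter, Finset.mem_product, Finset.mem_univ, true_and]
      constructor
      · rintro ⟨⟨hlt, heq⟩, h1⟩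
        exact ⟨⟨h1, heq ▸ h1⟩, hlt⟩
      · rintro ⟨⟨h1, h2⟩, hlt⟩
        exact ⟨⟨hlt, h1.trans h2.symm⟩, h1⟩
    rw [hfib, aux_card_lt_pairs, aux_count_eq_card]
  have hsumcount : ∑ t ∈ R.toFinset, R.count t = n := by
    have h := Multiset.toFinset_sum_count_eq (R : Multiset ℕ)
    simpa [hn] using h
  set S : ℕ := ∑ t ∈ R.toFinset, R.count t / 2 with hS
  have hnS : n = 2 * S + o := by
    rw [← hsumcount, ← ho, Finset.card_filter]
    rw [Finset.mul_sum, ← Finset.sum_add_distrib]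
    refine Finset.sum_congr rfl (fun t _ => ?_)
    by_cases h : Odd (R.count t)
    · rw [if_pos h]
      have := Nat.odd_iff.1 h
      omega
    · rw [if_neg h]
      have := Nat.even_iff.1 (Nat.not_odd_iff_even.1 h)
      omega
  have hE2 : E.card % 2 = S % 2 := by
    rw [hE3, hS, Finset.sum_nat_mod, Finset.sum_nat_mod (s := R.toFinset) (f := fun t => R.count t / 2)]
    congr 1
    exact Finset.sum_congr rfl (fun t _ => aux_choose_two_parity _)
  have hC2 : n.choose 2 % 2 = (n / 2) % 2 := aux_choose_two_parity n
  rw [Nat.even_iff, Nat.even_iff]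
  have hne := Nat.even_iff.1 hlen
  have hoe := Nat.even_iff.1 hoeven
  rw [hP2] at hEU
  omega
end

section
/- Let λ be a partition of an even positive integer d, and suppose the number o(λ) of parts-values occurring an odd number of times in λ is at least 2, with the number c of odd values among them being even. If c = 0, then the partition λ' obtained from λ by subtracting 1 from each part and deleting zeros has at least two odd values occurring an odd number of times; if c > 0, then λ' has at least one even value occurring an odd number of times. -/
/-- `oddValues μ` : the set of distinct values occurring with odd multiplicity
in the multiset `μ`. -/
def oddMultValues (μ : Multiset ℕ) : Finset ℕ :=
  μ.toFinset.filter (fun t => Odd (μ.count t))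

/-- The partition obtained by subtracting 1 from each part and deleting zeros. -/
def shiftDown (μ : Multiset ℕ) : Multiset ℕ :=
  (μ.map (· - 1)).filter (0 < ·)

lemma count_shiftDown (μ : Multiset ℕ) (t : ℕ) (ht : 0 < t) :
    (shiftDown μ).count t = μ.count (t + 1) := by
  unfold shiftDown
  rw [Multiset.count_filter, if_pos ht, Multiset.count_map,
    Multiset.count_eq_card_filter_eq]
  congr 1
  apply Multiset.filter_congr
  intro a _
  constructor <;> intro h <;> omega

lemma mem_oddMultValues {μ : Multiset ℕ} {t : ℕ} :
    t ∈ oddMultValues μ ↔ Odd (μ.count t) := by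
  simp only [oddMultValues, Finset.mem_filter, Multiset.mem_toFinset, and_iff_right_iff_imp]
  intro h
  rw [← Multiset.count_pos]
  exact h.pos

theorem shifted_partition_odd_multiplicities
    (d : ℕ) (hd : 0 < d) (hdeven : Even d)
    (lam : Multiset ℕ) (hpos : ∀ a ∈ lam, 0 < a) (hsum : lam.sum = d)
    (ho : 2 ≤ (oddMultValues lam).card)
    (c : ℕ) (hc : ((oddMultValues lam).filter (fun t => Odd t)).card = c)
    (hceven : Even c) :
    (c = 0 → 2 ≤ ((oddMultValues (shiftDown lam)).filter (fun t => Odd t)).card) ∧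
    (0 < c → 1 ≤ ((oddMultValues (shiftDown lam)).filter (fun t => Even t)).card) := by
  have hpos' : ∀ t ∈ oddMultValues lam, 0 < t := by
    intro t ht
    have := (Finset.mem_filter.mp ht).1
    exact hpos t (Multiset.mem_toFinset.mp this)
  constructor
  · intro hc0
    -- all odd-multiplicity values are even, hence ≥ 2
    have hemp : (oddMultValues lam).filter (fun t => Odd t) = ∅ :=
      Finset.card_eq_zero.mp (hc.trans hc0)
    have heven : ∀ t ∈ oddMultValues lam, Even t := by
      intro t ht
      rw [Nat.not_odd_iff_even.symm]
      intro hodd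
      exact absurd (Finset.mem_filter.mpr ⟨ht, hodd⟩) (by simp [hemp])
    calc 2 ≤ (oddMultValues lam).card := ho
      _ ≤ ((oddMultValues (shiftDown lam)).filter (fun t => Odd t)).card := by
        apply Finset.card_le_card_of_injOn (fun t => t - 1)
        · intro t ht
          have ht2 : 2 ≤ t := by
            have h0 := hpos' t ht
            obtain ⟨k, hk⟩ := heven t ht
            omega
          refine Finset.mem_filter.mpr ⟨mem_oddMultValues.mpr ?_, ?_⟩
          · rw [count_shiftDown lam (t - 1) (by omega)]
            have : t - 1 + 1 = t := by omega
            rw [this]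
            exact mem_oddMultValues.mp ht
          · have := heven t ht
            rcases this with ⟨k, hk⟩
            exact ⟨k - 1, by beta_reduce; omega⟩
        · intro a ha b hb hab
          have h1 := hpos' a ha; have h2 := hpos' b hb
          simp only at hab
          omega
  · intro hcpos
    have hc2 : 2 ≤ c := by
      rcases hceven with ⟨k, hk⟩; omega
    set S := (oddMultValues lam).filter (fun t => Odd t) with hS
    have hS1 : 1 ≤ (S.erase 1).card := by
      have := Finset.pred_card_le_card_erase (s := S) (a := 1)
      omega
    obtain ⟨t, ht⟩ := Finset.card_pos.mp hS1
    rw [Finset.mem_erase] at ht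
    obtain ⟨htne, htS⟩ := ht
    have htodd : Odd t := (Finset.mem_filter.mp htS).2
    have htmem : t ∈ oddMultValues lam := (Finset.mem_filter.mp htS).1
    have ht3 : 3 ≤ t := by
      rcases htodd with ⟨k, hk⟩; omega
    apply Finset.card_pos.mpr
    refine ⟨t - 1, Finset.mem_filter.mpr ⟨mem_oddMultValues.mpr ?_, ?_⟩⟩
    · rw [count_shiftDown lam (t - 1) (by omega)]
      have : t - 1 + 1 = t := by omega
      rw [this]
      exact mem_oddMultValues.mp htmem
    · rcases htodd with ⟨k, hk⟩
      exact ⟨k, by omega⟩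
end
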